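/- The relation ≾ is a linear preorder on W_ω: it is reflexive, transitive, and total (for all words A, B, either A ≾ B or B ≾ A). -/

import Mathlib

open scoped Classical

/-- Words: finite strings over the alphabet of natural numbers. -/
abbrev Word := List ℕ

/-- Lexicographic "not greater" comparison of finite sequences of words,
where entries are compared with the preorder `r`. -/
def LexLe (r : Word → Word → Prop) (xs ys : List Word) : Prop :=
  (xs.length ≤ ys.length ∧ ∀ i < xs.length,
      r (xs.getD i []) (ys.getD i []) ∧ r (ys.getD i []) (xs.getD i []))
  ∨ ∃ s, s < xs.length ∧ s < ys.length ∧
      (∀ i < s, r (xs.getD i []) (ys.getD i []) ∧ r (ys.getD i []) (xs.getD i [])) ∧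
      r (xs.getD s []) (ys.getD s []) ∧ ¬ r (ys.getD s []) (xs.getD s [])

/-- `M` is a lexicographically maximal subsequence of `xs` (w.r.t. entry preorder `r`). -/
def IsLexMax (r : Word → Word → Prop) (xs M : List Word) : Prop :=
  M.Sublist xs ∧ ∀ N : List Word, N.Sublist xs → LexLe r N M

/-- Fuelled version of the recursively defined preorder `≾` on words:
`Λ ≾ Λ`; and if `n` is the minimal symbol of `A ++ B`, split `A` and `B` into
blocks at `n` and compare the lexicographically maximal subsequences of blocks. -/
def leAux : ℕ → Word → Word → Prop
  | 0, A, B => A = [] ∧ B = []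
  | (fuel+1), A, B =>
      (A = [] ∧ B = []) ∨
      (∀ m, (A ++ B).min? = some m →
        ∀ MA MB : List Word, IsLexMax (leAux fuel) (A.splitOn m) MA →
          IsLexMax (leAux fuel) (B.splitOn m) MB →
          LexLe (leAux fuel) MA MB)

/-- The preorder `≾` on words (the fuel `|A|+|B|+1` suffices for the recursion). -/
def Wle (A B : Word) : Prop := leAux (A.length + B.length + 1) A B

/-- The equivalence `∼`: `A ≾ B` and `B ≾ A`. -/
def Wequiv (A B : Word) : Prop := Wle A B ∧ Wle B A

/-- The strict relation `≺`: `A ≾ B` and not `B ≾ A`. -/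
def Wlt (A B : Word) : Prop := Wle A B ∧ ¬ Wle B A

/-- Fuelled version of the normal form predicate `NF`. -/
def NFAux : ℕ → Word → Prop
  | 0, A => A = []
  | (fuel+1), A => A = [] ∨ ∀ m, A.min? = some m →
      (A.splitOn m).Chain' (fun x y => Wle y x) ∧ ∀ b ∈ A.splitOn m, NFAux fuel b

/-- `A` is in normal form. -/
def InNF (A : Word) : Prop := NFAux A.length A

/-- `◇ₖ A`: the normal form of the word `A` with symbol `k` appended. -/
noncomputable def diamond (k : ℕ) (A : Word) : Word :=
  if h : ∃ B, InNF B ∧ Wequiv B (A ++ [k]) then h.choose else []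

/-- Fuelled version of the ordinal value functions `o_n` on normal-form words in `S_n`. -/
noncomputable def oAux : ℕ → ℕ → Word → Ordinal
  | 0, _, _ => 0
  | (fuel+1), n, A =>
      if A.all (· = n) then (A.length : Ordinal)
      else ((A.splitOn n).map (fun b => Ordinal.omega0 ^ oAux fuel (n+1) b)).foldr (· + ·) 0

/-- The ordinal value function `o_n : NF ∩ S_n → Ordinals`. -/
noncomputable def oW (n : ℕ) (A : Word) : Ordinal :=
  oAux (A.foldr max 0 + A.length + 1) n A

/-- The towers of `ω`-exponentiations: `ω_0 = 1`, `ω_{n+1} = ω ^ ω_n`. -/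
noncomputable def omegaTower : ℕ → Ordinal
  | 0 => 1
  | (n+1) => Ordinal.omega0 ^ omegaTower n

/-- `ε₀`, the supremum of the `ω`-towers. -/
noncomputable def eps0 : Ordinal := ⨆ n : ℕ, omegaTower n

/-- The function `ψ` on ordinals: `ψ 0 = ω`, and for `α > 0` with Cantor normal form
`ω^{α_1}+⋯+ω^{α_n}` (non-increasing exponents), `ψ α = ω^{α_1}+⋯+ω^{α_{n-1}}+ω^{α_n+1}`. -/
noncomputable def psi (α : Ordinal) : Ordinal :=
  match (Ordinal.CNF Ordinal.omega0 α).getLast? with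
  | none => Ordinal.omega0
  | some p =>
      ((Ordinal.CNF Ordinal.omega0 α).dropLast).foldr
        (fun q r => Ordinal.omega0 ^ q.1 * q.2 + r) 0
      + (Ordinal.omega0 ^ p.1 * (p.2 - 1) + Ordinal.omega0 ^ (p.1 + 1))

/-- The standard fundamental sequences `α[n]` for limit ordinals below `ε₀`
(junk values elsewhere). -/
noncomputable def fundSeq (α : Ordinal) (n : ℕ) : Ordinal :=
  match (Ordinal.CNF Ordinal.omega0 α).getLast? with
  | none => 0
  | some p =>
    let pre := ((Ordinal.CNF Ordinal.omega0 α).dropLast).foldr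
        (fun q r => Ordinal.omega0 ^ q.1 * q.2 + r) 0
      + Ordinal.omega0 ^ p.1 * (p.2 - 1)
    if p.1 = 0 then 0
    else if h : ∃ e', p.1 = e' + 1 then
      pre + Ordinal.omega0 ^ h.choose * ((n : Ordinal) + 1)
    else if hlt : p.1 < α then pre + Ordinal.omega0 ^ (fundSeq p.1 n) else 0
termination_by α
decreasing_by exact hlt

/-- The relation `R`: `α R β` iff `β = α + 1`, or `β` is a limit and `α = β[n]` for some `n`. -/
def Rrel (α β : Ordinal) : Prop :=
  β = α + 1 ∨ (Order.IsSuccLimit β ∧ ∃ n : ℕ, α = fundSeq β n)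

lemma splitOn_facts (m : ℕ) (A : List ℕ) :
    ((A.splitOn m).map List.length).sum + (A.splitOn m).length = A.length + 1 ∧
    ∀ x ∈ A.splitOn m, m ∉ x := by
  induction A with
  | nil => simp [List.splitOn_nil]
  | cons a A ih =>
    rw [List.splitOn, List.splitOnP_cons]
    by_cases h : a = m
    · subst h
      simp only [beq_self_eq_true, if_pos]
      obtain ⟨h1, h2⟩ := ih
      constructor
      · simp only [List.map_cons, List.sum_cons, List.length_cons, List.length_nil]
        rw [List.splitOn] at h1; omega
      · intro x hx
        rcases List.mem_cons.1 hx with rfl | hx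
        · simp
        · exact h2 x hx
    · have hb : (a == m) = false := by simp [h]
      rw [hb, if_neg (by simp)]
      obtain ⟨h1, h2⟩ := ih
      rw [List.splitOn] at h1 h2
      rcases he : A.splitOnP (· == m) with _ | ⟨hd, tl⟩
      · exact absurd he (List.splitOnP_ne_nil _ _)
      · rw [he] at h1 h2
        simp only [List.modifyHead]
        constructor
        · simp_all; omega
        · intro x hx
          rcases List.mem_cons.1 hx with rfl | hx
          · simp only [List.mem_cons, not_or]
            exact ⟨Ne.symm h, h2 hd (by simp)⟩
          · exact h2 x (by simp [hx])

lemma splitOn_of_not_mem {m : ℕ} {A : List ℕ} (h : m ∉ A) : A.splitOn m = [A] :=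
  List.splitOnP_eq_single (by intro x hx; simp; rintro rfl; exact h hx)

lemma two_le_splitOn_length {m : ℕ} {A : List ℕ} (h : m ∈ A) : 2 ≤ (A.splitOn m).length := by
  obtain ⟨h1, h2⟩ := splitOn_facts m A
  rcases he : A.splitOn m with _ | ⟨hd, tl⟩
  · exact absurd he (List.splitOnP_ne_nil _ _)
  rcases tl with _ | ⟨hd2, tl⟩
  · exfalso
    rw [he] at h2
    have hi := List.intercalate_splitOn (xs := A) m
    rw [he] at hi
    simp [List.intercalate] at hi
    exact h2 hd (by simp) (hi ▸ h)
  · simp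

lemma len_le_sum {S : List Word} {x : Word} (hx : x ∈ S) :
    x.length ≤ (S.map List.length).sum := by
  induction S with
  | nil => simp at hx
  | cons a S ih =>
    rcases List.mem_cons.1 hx with rfl | hx
    · simp
    · simp only [List.map_cons, List.sum_cons]
      exact le_add_of_nonneg_of_le (Nat.zero_le _) (ih hx)

lemma len2_le_sum {S : List Word} {x y : Word} (hx : x ∈ S) (hy : y ∈ S) (hxy : x ≠ y) :
    x.length + y.length ≤ (S.map List.length).sum := by
  obtain ⟨S1, S2, rfl⟩ := List.append_of_mem hx
  have hy2 : y ∈ S1 ++ S2 := by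
    rcases List.mem_append.1 hy with h | h
    · exact List.mem_append.2 (Or.inl h)
    · rcases List.mem_cons.1 h with rfl | h
      · exact absurd rfl hxy
      · exact List.mem_append.2 (Or.inr h)
  have := len_le_sum hy2
  simp only [List.map_append, List.sum_append, List.map_cons, List.sum_cons] at *
  omega

lemma len3_le_sum {S : List Word} {x y z : Word} (hx : x ∈ S) (hy : y ∈ S) (hz : z ∈ S)
    (hxy : x ≠ y) (hxz : x ≠ z) (hyz : y ≠ z) :
    x.length + y.length + z.length ≤ (S.map List.length).sum := by
  obtain ⟨S1, S2, rfl⟩ := List.append_of_mem hx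
  have hmem : ∀ w : Word, w ∈ S1 ++ x :: S2 → w ≠ x → w ∈ S1 ++ S2 := by
    intro w hw hwx
    rcases List.mem_append.1 hw with h | h
    · exact List.mem_append.2 (Or.inl h)
    · rcases List.mem_cons.1 h with rfl | h
      · exact absurd rfl hwx
      · exact List.mem_append.2 (Or.inr h)
  have := len2_le_sum (hmem y hy (Ne.symm hxy)) (hmem z hz (Ne.symm hxz)) hyz
  simp only [List.map_append, List.sum_append, List.map_cons, List.sum_cons] at *
  omega

example (l : List ℕ) (m : ℕ) (h : l.min? = some m) : m ∈ l ∧ ∀ x ∈ l, m ≤ x := by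
  rw [List.min?_eq_some_iff'] at h; exact ⟨h.1, h.2⟩

lemma gm {L : List Word} {i : ℕ} (h : i < L.length) : L.getD i [] ∈ L := by
  rw [List.getD_eq_getElem _ _ h]
  exact List.getElem_mem h

section lexle
variable {r r' : Word → Word → Prop} {l N M K : List Word}

lemma lexle_refl (hrefl : ∀ x ∈ M, r x x) : LexLe r M M :=
  Or.inl ⟨le_refl _, fun i hi => ⟨hrefl _ (gm hi), hrefl _ (gm hi)⟩⟩

lemma lexle_mono (H : ∀ x ∈ l, ∀ y ∈ l, r x y → r' x y)
    (H' : ∀ x ∈ l, ∀ y ∈ l, r' x y → r x y)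
    (hN : ∀ x ∈ N, x ∈ l) (hM : ∀ x ∈ M, x ∈ l) :
    LexLe r N M → LexLe r' N M := by
  rintro (⟨hlen, heq⟩ | ⟨s, hsN, hsM, hpre, hs1, hs2⟩)
  · refine Or.inl ⟨hlen, fun i hi => ?_⟩
    have h1 := gm hi
    have h2 := gm (lt_of_lt_of_le hi hlen)
    exact ⟨H _ (hN _ h1) _ (hM _ h2) (heq i hi).1, H _ (hM _ h2) _ (hN _ h1) (heq i hi).2⟩
  · refine Or.inr ⟨s, hsN, hsM, fun i hi => ?_, ?_, ?_⟩
    · have h1 := gm (lt_trans hi hsN)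
      have h2 := gm (lt_trans hi hsM)
      exact ⟨H _ (hN _ h1) _ (hM _ h2) (hpre i hi).1, H _ (hM _ h2) _ (hN _ h1) (hpre i hi).2⟩
    · exact H _ (hN _ (gm hsN)) _ (hM _ (gm hsM)) hs1
    · exact fun hc => hs2 (H' _ (hM _ (gm hsM)) _ (hN _ (gm hsN)) hc)

lemma lexle_congr (H : ∀ x ∈ l, ∀ y ∈ l, (r x y ↔ r' x y))
    (hN : ∀ x ∈ N, x ∈ l) (hM : ∀ x ∈ M, x ∈ l) :
    LexLe r N M ↔ LexLe r' N M :=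
  ⟨lexle_mono (fun x hx y hy => (H x hx y hy).1) (fun x hx y hy => (H x hx y hy).2) hN hM,
   lexle_mono (fun x hx y hy => (H x hx y hy).2) (fun x hx y hy => (H x hx y hy).1) hN hM⟩

lemma islexmax_congr (H : ∀ x ∈ l, ∀ y ∈ l, (r x y ↔ r' x y)) :
    IsLexMax r l M ↔ IsLexMax r' l M := by
  unfold IsLexMax
  constructor
  · rintro ⟨h1, h2⟩
    exact ⟨h1, fun P hP => (lexle_congr H (fun x hx => hP.subset hx)
      (fun x hx => h1.subset hx)).1 (h2 P hP)⟩
  · rintro ⟨h1, h2⟩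
    exact ⟨h1, fun P hP => (lexle_congr H (fun x hx => hP.subset hx)
      (fun x hx => h1.subset hx)).2 (h2 P hP)⟩

lemma lexle_total
    (htot : ∀ i, i < N.length → i < M.length →
      r (N.getD i []) (M.getD i []) ∨ r (M.getD i []) (N.getD i [])) :
    LexLe r N M ∨ LexLe r M N := by
  by_cases hall : ∀ i, i < N.length → i < M.length →
      (r (N.getD i []) (M.getD i []) ∧ r (M.getD i []) (N.getD i []))
  · by_cases hlen : N.length ≤ M.length
    · exact Or.inl (Or.inl ⟨hlen, fun i hi => hall i hi (lt_of_lt_of_le hi hlen)⟩)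
    · refine Or.inr (Or.inl ⟨le_of_not_ge hlen, fun i hi => ?_⟩)
      have := hall i (lt_of_lt_of_le hi (le_of_not_ge hlen)) hi
      exact ⟨this.2, this.1⟩
  · push_neg at hall
    have hex : ∃ i, i < N.length ∧ i < M.length ∧
        ¬(r (N.getD i []) (M.getD i []) ∧ r (M.getD i []) (N.getD i [])) := by
      obtain ⟨i, h1, h2, h3⟩ := hall
      exact ⟨i, h1, h2, fun hc => h3 hc.1 hc.2⟩
    classical
    let s := Nat.find hex
    obtain ⟨hsN, hsM, hs⟩ := Nat.find_spec hex
    have hpre : ∀ i < s, r (N.getD i []) (M.getD i []) ∧ r (M.getD i []) (N.getD i []) := by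
      intro i hi
      have hmin := Nat.find_min hex hi
      push_neg at hmin
      exact hmin (lt_trans hi hsN) (lt_trans hi hsM)
    rcases htot s hsN hsM with h | h
    · have : ¬ r (M.getD s []) (N.getD s []) := fun hc => hs ⟨h, hc⟩
      exact Or.inl (Or.inr ⟨s, hsN, hsM, hpre, h, this⟩)
    · have : ¬ r (N.getD s []) (M.getD s []) := fun hc => hs ⟨hc, h⟩
      refine Or.inr (Or.inr ⟨s, hsM, hsN, fun i hi => (hpre i hi).symm, h, this⟩)

lemma lexle_trans
    (htrans : ∀ a ∈ l, ∀ b ∈ l, ∀ c ∈ l, r a b → r b c → r a c)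
    (hN : ∀ x ∈ N, x ∈ l) (hM : ∀ x ∈ M, x ∈ l) (hK : ∀ x ∈ K, x ∈ l) :
    LexLe r N M → LexLe r M K → LexLe r N K := by
  have T : ∀ {i j k : ℕ} {X Y Z : List Word}, (∀ x ∈ X, x ∈ l) → (∀ x ∈ Y, x ∈ l) →
      (∀ x ∈ Z, x ∈ l) → (hi : i < X.length) → (hj : j < Y.length) → (hk : k < Z.length) →
      r (X.getD i []) (Y.getD j []) → r (Y.getD j []) (Z.getD k []) →
      r (X.getD i []) (Z.getD k []) := by
    intro i j k X Y Z hX hY hZ hi hj hk h1 h2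
    exact htrans _ (hX _ (gm hi)) _ (hY _ (gm hj)) _ (hZ _ (gm hk)) h1 h2
  rintro (⟨hlen, heq⟩ | ⟨s, hsN, hsM, hpre, hs1, hs2⟩)
    (⟨hlen', heq'⟩ | ⟨t, htM, htK, hpre', ht1, ht2⟩)
  · refine Or.inl ⟨le_trans hlen hlen', fun i hi => ?_⟩
    have hiM := lt_of_lt_of_le hi hlen
    have hiK := lt_of_lt_of_le hiM hlen'
    exact ⟨T hN hM hK hi hiM hiK (heq i hi).1 (heq' i hiM).1,
      T hK hM hN hiK hiM hi (heq' i hiM).2 (heq i hi).2⟩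
  · by_cases h : t < N.length
    · refine Or.inr ⟨t, h, htK, fun i hi => ?_, ?_, ?_⟩
      · have hiN := lt_trans hi h
        have hiM := lt_trans hi htM
        have hiK := lt_trans hi htK
        exact ⟨T hN hM hK hiN hiM hiK (heq i hiN).1 (hpre' i hi).1,
          T hK hM hN hiK hiM hiN (hpre' i hi).2 (heq i hiN).2⟩
      · exact T hN hM hK h htM htK (heq t h).1 ht1
      · intro hc
        exact ht2 (T hK hN hM htK h htM hc (heq t h).1)
    · push_neg at h
      refine Or.inl ⟨le_trans h (le_of_lt htK), fun i hi => ?_⟩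
      have hit := lt_of_lt_of_le hi h
      have hiM := lt_of_lt_of_le hi hlen
      have hiK := lt_trans hit htK
      exact ⟨T hN hM hK hi hiM hiK (heq i hi).1 (hpre' i hit).1,
        T hK hM hN hiK hiM hi (hpre' i hit).2 (heq i hi).2⟩
  · refine Or.inr ⟨s, hsN, lt_of_lt_of_le hsM hlen', fun i hi => ?_, ?_, ?_⟩
    · have hiN := lt_trans hi hsN
      have hiM := lt_trans hi hsM
      have hiK := lt_of_lt_of_le hiM hlen'
      exact ⟨T hN hM hK hiN hiM hiK (hpre i hi).1 (heq' i hiM).1,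
        T hK hM hN hiK hiM hiN (heq' i hiM).2 (hpre i hi).2⟩
    · exact T hN hM hK hsN hsM (lt_of_lt_of_le hsM hlen') hs1 (heq' s hsM).1
    · intro hc
      exact hs2 (T hM hK hN hsM (lt_of_lt_of_le hsM hlen') hsN (heq' s hsM).1 hc) |>.elim
  · rcases lt_trichotomy s t with hst | hst | hst
    · refine Or.inr ⟨s, hsN, lt_trans hst htK, fun i hi => ?_, ?_, ?_⟩
      · have hiN := lt_trans hi hsN
        have hiM := lt_trans hi hsM
        have hiK := lt_trans (lt_trans hi hst) htK
        exact ⟨T hN hM hK hiN hiM hiK (hpre i hi).1 (hpre' i (lt_trans hi hst)).1,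
          T hK hM hN hiK hiM hiN (hpre' i (lt_trans hi hst)).2 (hpre i hi).2⟩
      · exact T hN hM hK hsN hsM (lt_trans hst htK) hs1 (hpre' s hst).1
      · intro hc
        exact hs2 (T hM hK hN hsM (lt_trans hst htK) hsN (hpre' s hst).1 hc)
    · subst hst
      refine Or.inr ⟨s, hsN, htK, fun i hi => ?_, ?_, ?_⟩
      · have hiN := lt_trans hi hsN
        have hiM := lt_trans hi hsM
        have hiK := lt_trans hi htK
        exact ⟨T hN hM hK hiN hiM hiK (hpre i hi).1 (hpre' i hi).1,
          T hK hM hN hiK hiM hiN (hpre' i hi).2 (hpre i hi).2⟩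
      · exact T hN hM hK hsN hsM htK hs1 ht1
      · intro hc
        exact ht2 (T hK hN hM htK hsN hsM hc hs1)
    · refine Or.inr ⟨t, lt_trans hst hsN, htK, fun i hi => ?_, ?_, ?_⟩
      · have hiN := lt_trans hi (lt_trans hst hsN)
        have hiM := lt_trans hi htM
        have hiK := lt_trans hi htK
        exact ⟨T hN hM hK hiN hiM hiK (hpre i (lt_trans hi hst)).1 (hpre' i hi).1,
          T hK hM hN hiK hiM hiN (hpre' i hi).2 (hpre i (lt_trans hi hst)).2⟩
      · exact T hN hM hK (lt_trans hst hsN) htM htK (hpre t hst).1 ht1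
      · intro hc
        exact ht2 (T hK hN hM htK (lt_trans hst hsN) htM hc (hpre t hst).1)

end lexle

lemma exists_max_rel {α : Type*} (R : α → α → Prop) :
    ∀ (L : List α), L ≠ [] → (∀ a ∈ L, ∀ b ∈ L, R a b ∨ R b a) →
    (∀ a ∈ L, ∀ b ∈ L, ∀ c ∈ L, R a b → R b c → R a c) →
    ∃ m ∈ L, ∀ x ∈ L, R x m := by
  intro L
  induction L with
  | nil => intro h; exact absurd rfl h
  | cons a L ih =>
    intro _ htot htrans
    rcases eq_or_ne L [] with rfl | hL
    · refine ⟨a, by simp, fun x hx => ?_⟩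
      rcases List.mem_cons.1 hx with rfl | hx
      · rcases htot x hx x hx with h | h <;> exact h
      · simp at hx
    · obtain ⟨m', hm', hmax⟩ := ih hL
        (fun x hx y hy => htot x (by simp [hx]) y (by simp [hy]))
        (fun x hx y hy z hz => htrans x (by simp [hx]) y (by simp [hy]) z (by simp [hz]))
      rcases htot a (by simp) m' (by simp [hm']) with h | h
      · refine ⟨m', by simp [hm'], fun x hx => ?_⟩
        rcases List.mem_cons.1 hx with rfl | hx
        · exact h
        · exact hmax x hx
      · refine ⟨a, by simp, fun x hx => ?_⟩
        rcases List.mem_cons.1 hx with rfl | hx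
        · rcases htot x hx x hx with h' | h' <;> exact h'
        · exact htrans x (by simp [hx]) m' (by simp [hm']) _ (by simp) (hmax x hx) h

lemma exists_isLexMax {r : Word → Word → Prop} {l : List Word}
    (htot : ∀ x ∈ l, ∀ y ∈ l, r x y ∨ r y x)
    (htrans : ∀ a ∈ l, ∀ b ∈ l, ∀ c ∈ l, r a b → r b c → r a c) :
    ∃ M, IsLexMax r l M := by
  have hne : l.sublists ≠ [] := by
    intro h
    have : ([] : List Word) ∈ l.sublists := List.mem_sublists.2 (List.nil_sublist l)
    rw [h] at this
    simp at this
  have h1 : ∀ a ∈ l.sublists, ∀ b ∈ l.sublists, LexLe r a b ∨ LexLe r b a := by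
    intro a ha b hb
    exact lexle_total (fun i hiN hiM =>
      htot _ ((List.mem_sublists.1 ha).subset (gm hiN)) _ ((List.mem_sublists.1 hb).subset (gm hiM)))
  have h2 : ∀ a ∈ l.sublists, ∀ b ∈ l.sublists, ∀ c ∈ l.sublists,
      LexLe r a b → LexLe r b c → LexLe r a c := by
    intro a ha b hb c hc
    exact lexle_trans htrans (fun x hx => (List.mem_sublists.1 ha).subset hx)
      (fun x hx => (List.mem_sublists.1 hb).subset hx)
      (fun x hx => (List.mem_sublists.1 hc).subset hx)
  obtain ⟨m, hm, hmax⟩ := exists_max_rel (LexLe r) l.sublists hne h1 h2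
  exact ⟨m, List.mem_sublists.1 hm, fun P hP => hmax P (List.mem_sublists.2 hP)⟩

lemma cmp_congr {r r' : Word → Word → Prop} {lA lB : List Word}
    (H : ∀ x ∈ lA ++ lB, ∀ y ∈ lA ++ lB, (r x y ↔ r' x y)) :
    (∀ MA MB, IsLexMax r lA MA → IsLexMax r lB MB → LexLe r MA MB) ↔
    (∀ MA MB, IsLexMax r' lA MA → IsLexMax r' lB MB → LexLe r' MA MB) := by
  have HA : ∀ x ∈ lA, ∀ y ∈ lA, (r x y ↔ r' x y) := fun x hx y hy =>
    H x (List.mem_append.2 (Or.inl hx)) y (List.mem_append.2 (Or.inl hy))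
  have HB : ∀ x ∈ lB, ∀ y ∈ lB, (r x y ↔ r' x y) := fun x hx y hy =>
    H x (List.mem_append.2 (Or.inr hx)) y (List.mem_append.2 (Or.inr hy))
  constructor
  · intro H' MA MB hMA hMB
    have hMA' := (islexmax_congr HA).2 hMA
    have hMB' := (islexmax_congr HB).2 hMB
    exact (lexle_congr H (fun x hx => List.mem_append.2 (Or.inl (hMA'.1.subset hx)))
      (fun x hx => List.mem_append.2 (Or.inr (hMB'.1.subset hx)))).1 (H' MA MB hMA' hMB')
  · intro H' MA MB hMA hMB
    have hMA' := (islexmax_congr HA).1 hMA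
    have hMB' := (islexmax_congr HB).1 hMB
    exact (lexle_congr H (fun x hx => List.mem_append.2 (Or.inl (hMA.1.subset hx)))
      (fun x hx => List.mem_append.2 (Or.inr (hMB.1.subset hx)))).2 (H' MA MB hMA' hMB')

lemma sum_blocks_le {m : ℕ} {A B : Word} (hm : m ∈ A ++ B) :
    ((A.splitOn m ++ B.splitOn m).map List.length).sum + 1 ≤ A.length + B.length := by
  have h1 := (splitOn_facts m A).1
  have h2 := (splitOn_facts m B).1
  have hA1 : 1 ≤ (A.splitOn m).length := by
    have := List.splitOnP_ne_nil (· == m) A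
    rw [List.splitOn] at *
    exact List.length_pos_iff.2 this
  have hB1 : 1 ≤ (B.splitOn m).length := by
    have := List.splitOnP_ne_nil (· == m) B
    rw [List.splitOn] at *
    exact List.length_pos_iff.2 this
  have h3 : 2 ≤ (A.splitOn m).length ∨ 2 ≤ (B.splitOn m).length := by
    rcases List.mem_append.1 hm with h | h
    · exact Or.inl (two_le_splitOn_length h)
    · exact Or.inr (two_le_splitOn_length h)
  simp only [List.map_append, List.sum_append]
  omega

lemma sum_blocks_le_diag {m : ℕ} {A : Word} (hm : m ∈ A) :
    ((A.splitOn m).map List.length).sum + 1 ≤ A.length := by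
  have h1 := (splitOn_facts m A).1
  have := two_le_splitOn_length hm
  omega

lemma leAux_stable : ∀ k f g A B, f + g ≤ k →
    ((A.length + B.length < f ∧ A.length + B.length < g) ∨
      (A = B ∧ A.length < f ∧ A.length < g)) →
    (leAux f A B ↔ leAux g A B) := by
  intro k
  induction k with
  | zero =>
    intro f g A B hfg h
    exfalso
    rcases h with ⟨h1, h2⟩ | ⟨_, h1, h2⟩ <;> omega
  | succ k ih =>
    intro f g A B hfg h
    have hf : 0 < f ∧ 0 < g := by rcases h with ⟨h1, h2⟩ | ⟨_, h1, h2⟩ <;> exact ⟨by omega, by omega⟩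
    obtain ⟨f, rfl⟩ : ∃ f', f = f' + 1 := ⟨f - 1, by omega⟩
    obtain ⟨g, rfl⟩ : ∃ g', g = g' + 1 := ⟨g - 1, by omega⟩
    simp only [leAux]
    refine or_congr Iff.rfl (forall_congr' fun m => imp_congr_right fun hm => ?_)
    have hmem : m ∈ A ++ B := (List.min?_eq_some_iff'.1 hm).1
    rcases h with ⟨h1, h2⟩ | ⟨rfl, h1, h2⟩
    · have hsum := sum_blocks_le hmem
      apply cmp_congr
      intro x hx y hy
      by_cases hxy : x = y
      · subst hxy
        have hb := len_le_sum hx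
        exact ih f g x x (by omega) (Or.inr ⟨rfl, by omega, by omega⟩)
      · have hb := len2_le_sum hx hy hxy
        exact ih f g x y (by omega) (Or.inl ⟨by omega, by omega⟩)
    · have hmA : m ∈ A := by
        rcases List.mem_append.1 hmem with hh | hh <;> exact hh
      have hsum := sum_blocks_le_diag hmA
      apply cmp_congr
      intro x hx y hy
      have hx' : x ∈ A.splitOn m := by
        rcases List.mem_append.1 hx with hh | hh <;> exact hh
      have hy' : y ∈ A.splitOn m := by
        rcases List.mem_append.1 hy with hh | hh <;> exact hh
      by_cases hxy : x = y
      · subst hxy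
        have hb := len_le_sum hx'
        exact ih f g x x (by omega) (Or.inr ⟨rfl, by omega, by omega⟩)
      · have hb := len2_le_sum hx' hy' hxy
        exact ih f g x y (by omega) (Or.inl ⟨by omega, by omega⟩)


lemma wle_iff (A B : Word) : Wle A B ↔ ((A = [] ∧ B = []) ∨
    ∀ m, (A ++ B).min? = some m →
      ∀ MA MB, IsLexMax Wle (A.splitOn m) MA → IsLexMax Wle (B.splitOn m) MB →
        LexLe Wle MA MB) := by
  show leAux (A.length + B.length + 1) A B ↔ _
  simp only [leAux]
  refine or_congr Iff.rfl (forall_congr' fun m => imp_congr_right fun hm => ?_)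
  have hmem : m ∈ A ++ B := (List.min?_eq_some_iff'.1 hm).1
  have hsum := sum_blocks_le hmem
  apply cmp_congr
  intro x hx y hy
  by_cases hxy : x = y
  · subst hxy
    have hb := len_le_sum hx
    exact leAux_stable ((A.length + B.length) + (x.length + x.length + 1)) _ _ x x (le_refl _)
      (Or.inr ⟨rfl, by omega, by omega⟩)
  · have hb := len2_le_sum hx hy hxy
    exact leAux_stable ((A.length + B.length) + (x.length + y.length + 1)) _ _ x y (le_refl _)
      (Or.inl ⟨by omega, by omega⟩)

lemma wle_refl (A : Word) : Wle A A := by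
  rw [wle_iff]
  rcases eq_or_ne A [] with rfl | h
  · exact Or.inl ⟨rfl, rfl⟩
  · exact Or.inr fun m hm MA MB hMA hMB => hMB.2 MA hMA.1

lemma islexmax_singleton {X : Word} {M : List Word} : IsLexMax Wle [X] M ↔ M = [X] := by
  constructor
  · rintro ⟨hsub, hmax⟩
    rcases List.sublist_singleton.1 hsub with rfl | rfl
    · exfalso
      rcases hmax [X] (List.Sublist.refl _) with ⟨hlen, _⟩ | ⟨s, hs, hs', _⟩
      · simp at hlen
      · simp at hs'
    · rfl
  · rintro rfl
    refine ⟨List.Sublist.refl _, fun N hN => ?_⟩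
    rcases List.sublist_singleton.1 hN with rfl | rfl
    · exact Or.inl ⟨by simp, by simp⟩
    · exact lexle_refl (by rintro x hx; rcases List.mem_singleton.1 hx with rfl; exact wle_refl x)

lemma lexle_singleton {A B : Word} : LexLe Wle [A] [B] ↔ Wle A B := by
  constructor
  · rintro (⟨_, h⟩ | ⟨s, hs, _, _, h, _⟩)
    · simpa using (h 0 (by simp)).1
    · have hs0 : s = 0 := by simp at hs; omega
      subst hs0
      simpa using h
  · intro h
    by_cases hBA : Wle B A
    · refine Or.inl ⟨le_refl _, fun i hi => ?_⟩
      have hi0 : i = 0 := by simp at hi; omega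
      subst hi0
      simpa using ⟨h, hBA⟩
    · refine Or.inr ⟨0, by simp, by simp, by simp, by simpa using h, by simpa using hBA⟩

lemma wle_iff_cmp {m : ℕ} {A B : Word} (hm : ∀ x ∈ A ++ B, m ≤ x) :
    Wle A B ↔ (∀ MA MB, IsLexMax Wle (A.splitOn m) MA → IsLexMax Wle (B.splitOn m) MB →
      LexLe Wle MA MB) := by
  by_cases hmem : m ∈ A ++ B
  · have hmin : (A ++ B).min? = some m := List.min?_eq_some_iff'.2 ⟨hmem, hm⟩
    rw [wle_iff]
    constructor
    · rintro (⟨rfl, rfl⟩ | H)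
      · simp at hmem
      · exact H m hmin
    · intro H
      refine Or.inr fun m' hm' => ?_
      rw [hmin] at hm'
      rw [← Option.some_inj.1 hm']
      exact H
  · have hA : m ∉ A := fun hh => hmem (List.mem_append.2 (Or.inl hh))
    have hB : m ∉ B := fun hh => hmem (List.mem_append.2 (Or.inr hh))
    rw [splitOn_of_not_mem hA, splitOn_of_not_mem hB]
    constructor
    · intro h MA MB hMA hMB
      rw [islexmax_singleton.1 hMA, islexmax_singleton.1 hMB]
      exact lexle_singleton.2 h
    · intro H
      exact lexle_singleton.1 (H [A] [B] (islexmax_singleton.2 rfl) (islexmax_singleton.2 rfl))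

lemma sum_blocks_le3 {m : ℕ} {A B C : Word} (hm : m ∈ A ++ B ++ C) :
    ((A.splitOn m ++ B.splitOn m ++ C.splitOn m).map List.length).sum + 1 ≤
      A.length + B.length + C.length := by
  have h1 := (splitOn_facts m A).1
  have h2 := (splitOn_facts m B).1
  have h3 := (splitOn_facts m C).1
  have hA1 : 1 ≤ (A.splitOn m).length :=
    List.length_pos_iff.2 (by rw [List.splitOn]; exact List.splitOnP_ne_nil _ _)
  have hB1 : 1 ≤ (B.splitOn m).length :=
    List.length_pos_iff.2 (by rw [List.splitOn]; exact List.splitOnP_ne_nil _ _)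
  have hC1 : 1 ≤ (C.splitOn m).length :=
    List.length_pos_iff.2 (by rw [List.splitOn]; exact List.splitOnP_ne_nil _ _)
  have h4 : 2 ≤ (A.splitOn m).length ∨ 2 ≤ (B.splitOn m).length ∨ 2 ≤ (C.splitOn m).length := by
    rcases List.mem_append.1 hm with h | h
    · rcases List.mem_append.1 h with h | h
      · exact Or.inl (two_le_splitOn_length h)
      · exact Or.inr (Or.inl (two_le_splitOn_length h))
    · exact Or.inr (Or.inr (two_le_splitOn_length h))
  simp only [List.map_append, List.sum_append]
  omega

lemma tot_and_trans : ∀ n : ℕ,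
    (∀ A B : Word, A.length + B.length ≤ n → (Wle A B ∨ Wle B A)) ∧
    (∀ A B C : Word, A.length + B.length + C.length ≤ n → Wle A B → Wle B C → Wle A C) := by
  intro n
  induction n using Nat.strong_induction_on with
  | _ n ih =>
  constructor
  · intro A B hn
    rcases he : (A ++ B).min? with _ | m
    · rw [List.min?_eq_none_iff] at he
      obtain ⟨rfl, rfl⟩ := List.append_eq_nil_iff.1 he
      exact Or.inl (wle_refl [])
    · have hspec := List.min?_eq_some_iff'.1 he
      have hmem := hspec.1
      have hle : ∀ x ∈ A ++ B, m ≤ x := hspec.2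
      have hle' : ∀ x ∈ B ++ A, m ≤ x := fun x hx => hle x (by
        rw [List.mem_append] at *; tauto)
      rw [wle_iff_cmp hle, wle_iff_cmp hle']
      have hsum := sum_blocks_le hmem
      set S := A.splitOn m ++ B.splitOn m with hS
      have sA : ∀ {M : List Word}, M.Sublist (A.splitOn m) → ∀ x ∈ M, x ∈ S :=
        fun hMs x hx => List.mem_append.2 (Or.inl (hMs.subset hx))
      have sB : ∀ {M : List Word}, M.Sublist (B.splitOn m) → ∀ x ∈ M, x ∈ S :=
        fun hMs x hx => List.mem_append.2 (Or.inr (hMs.subset hx))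
      have htotS : ∀ x ∈ S, ∀ y ∈ S, Wle x y ∨ Wle y x := by
        intro x hx y hy
        by_cases hxy : x = y
        · subst hxy; exact Or.inl (wle_refl x)
        · have hb := len2_le_sum hx hy hxy
          exact (ih (x.length + y.length) (by omega)).1 x y (le_refl _)
      have htransS : ∀ a ∈ S, ∀ b ∈ S, ∀ c ∈ S, Wle a b → Wle b c → Wle a c := by
        intro a ha b hb c hc h1 h2
        by_cases hab : a = b
        · subst hab; exact h2
        by_cases hbc : b = c
        · subst hbc; exact h1
        by_cases hac : a = c
        · subst hac; exact wle_refl a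
        have hb3 := len3_le_sum ha hb hc hab hac hbc
        exact (ih (a.length + b.length + c.length) (by omega)).2 a b c (le_refl _) h1 h2
      by_cases hC : ∀ MA MB, IsLexMax Wle (A.splitOn m) MA → IsLexMax Wle (B.splitOn m) MB →
          LexLe Wle MA MB
      · exact Or.inl hC
      · push_neg at hC
        obtain ⟨MA₀, MB₀, hMA₀, hMB₀, hnot⟩ := hC
        refine Or.inr fun MB MA hMB hMA => ?_
        have h1 : LexLe Wle MB₀ MA₀ := by
          rcases lexle_total (r := Wle) (N := MA₀) (M := MB₀) (fun i hiN hiM =>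
            htotS _ (sA hMA₀.1 _ (gm hiN)) _ (sB hMB₀.1 _ (gm hiM))) with h | h
          · exact absurd h hnot
          · exact h
        have h2 : LexLe Wle MB MB₀ := hMB₀.2 MB hMB.1
        have h3 : LexLe Wle MA₀ MA := hMA.2 MA₀ hMA₀.1
        exact lexle_trans htransS (sB hMB.1) (sA hMA₀.1) (sA hMA.1)
          (lexle_trans htransS (sB hMB.1) (sB hMB₀.1) (sA hMA₀.1) h2 h1) h3
  · intro A B C hn hab hbc
    rcases he : (A ++ B ++ C).min? with _ | m
    · rw [List.min?_eq_none_iff] at he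
      obtain ⟨h1, rfl⟩ := List.append_eq_nil_iff.1 he
      obtain ⟨rfl, rfl⟩ := List.append_eq_nil_iff.1 h1
      exact wle_refl []
    · have hspec := List.min?_eq_some_iff'.1 he
      have hmem := hspec.1
      have hle : ∀ x ∈ A ++ B ++ C, m ≤ x := hspec.2
      have hleAB : ∀ x ∈ A ++ B, m ≤ x := fun x hx =>
        hle x (List.mem_append.2 (Or.inl hx))
      have hleBC : ∀ x ∈ B ++ C, m ≤ x := fun x hx => hle x (by
        rcases List.mem_append.1 hx with h | h
        · exact List.mem_append.2 (Or.inl (List.mem_append.2 (Or.inr h)))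
        · exact List.mem_append.2 (Or.inr h))
      have hleAC : ∀ x ∈ A ++ C, m ≤ x := fun x hx => hle x (by
        rcases List.mem_append.1 hx with h | h
        · exact List.mem_append.2 (Or.inl (List.mem_append.2 (Or.inl h)))
        · exact List.mem_append.2 (Or.inr h))
      rw [wle_iff_cmp hleAB] at hab
      rw [wle_iff_cmp hleBC] at hbc
      rw [wle_iff_cmp hleAC]
      intro MA MC hMA hMC
      have hsum := sum_blocks_le3 hmem
      set S := A.splitOn m ++ B.splitOn m ++ C.splitOn m with hS
      have sA : ∀ {M : List Word}, M.Sublist (A.splitOn m) → ∀ x ∈ M, x ∈ S :=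
        fun hMs x hx => List.mem_append.2 (Or.inl (List.mem_append.2 (Or.inl (hMs.subset hx))))
      have sB : ∀ {M : List Word}, M.Sublist (B.splitOn m) → ∀ x ∈ M, x ∈ S :=
        fun hMs x hx => List.mem_append.2 (Or.inl (List.mem_append.2 (Or.inr (hMs.subset hx))))
      have sC : ∀ {M : List Word}, M.Sublist (C.splitOn m) → ∀ x ∈ M, x ∈ S :=
        fun hMs x hx => List.mem_append.2 (Or.inr (hMs.subset hx))
      have htotS : ∀ x ∈ S, ∀ y ∈ S, Wle x y ∨ Wle y x := by
        intro x hx y hy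
        by_cases hxy : x = y
        · subst hxy; exact Or.inl (wle_refl x)
        · have hb := len2_le_sum hx hy hxy
          exact (ih (x.length + y.length) (by omega)).1 x y (le_refl _)
      have htransS : ∀ a ∈ S, ∀ b ∈ S, ∀ c ∈ S, Wle a b → Wle b c → Wle a c := by
        intro a ha b hb c hc h1 h2
        by_cases hab' : a = b
        · subst hab'; exact h2
        by_cases hbc' : b = c
        · subst hbc'; exact h1
        by_cases hac' : a = c
        · subst hac'; exact wle_refl a
        have hb3 := len3_le_sum ha hb hc hab' hac' hbc'
        exact (ih (a.length + b.length + c.length) (by omega)).2 a b c (le_refl _) h1 h2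
      obtain ⟨MB, hMB⟩ := exists_isLexMax (r := Wle) (l := B.splitOn m)
        (fun x hx y hy => htotS x (sB (List.Sublist.refl _) x hx) y (sB (List.Sublist.refl _) y hy))
        (fun a ha b hb c hc => htransS a (sB (List.Sublist.refl _) a ha)
          b (sB (List.Sublist.refl _) b hb) c (sB (List.Sublist.refl _) c hc))
      exact lexle_trans htransS (sA hMA.1) (sB hMB.1) (sC hMC.1)
        (hab MA MB hMA hMB) (hbc MB MC hMB hMC)


theorem wle_linear_preorder :
    (∀ A : Word, Wle A A) ∧
    (∀ A B C : Word, Wle A B → Wle B C → Wle A C) ∧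
    (∀ A B : Word, Wle A B ∨ Wle B A) := by
  refine ⟨wle_refl, fun A B C hab hbc =>
    (tot_and_trans (A.length + B.length + C.length)).2 A B C (le_refl _) hab hbc,
    fun A B => (tot_and_trans (A.length + B.length)).1 A B (le_refl _)⟩
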